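/- Let S be multiplicative and satisfy: for every prime p and j ≥ 1, if p^j ∈ S then p^ℓ ∈ S for all ℓ ≥ j. Then the ring of complex-valued arithmetic functions under pointwise addition and S-convolution has zero divisors if and only if S ≠ ℕ⁺. Specifically, if some prime p ∉ S, then the function f with f(p) = 1 and f(n) = 0 for n ≠ p satisfies f *_S f = 0 though f ≠ 0. -/

import Mathlib

open Finset
open scoped Classical

/-- Characteristic function of `S` (complex-valued). -/
noncomputable def rho (S : Set ℕ) (n : ℕ) : ℂ :=
  if n ∈ S then 1 else 0

/-- The `S`-convolution of arithmetic functions. -/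
noncomputable def sconv (S : Set ℕ) (f g : ℕ → ℂ) (n : ℕ) : ℂ :=
  ∑ d ∈ n.divisors, rho S (Nat.gcd d (n / d)) * f d * g (n / d)

/-- A multiplicative arithmetic function. -/
def IsMult (f : ℕ → ℂ) : Prop :=
  f 1 = 1 ∧ ∀ m n : ℕ, Nat.Coprime m n → f (m * n) = f m * f n

lemma sconv_key (S : Set ℕ) (p : ℕ) (hp : p ∉ S) (n : ℕ) :
    sconv S (fun m => if m = p then (1:ℂ) else 0) (fun m => if m = p then 1 else 0) n = 0 := by
  unfold sconv
  apply Finset.sum_eq_zero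
  intro d _
  rcases eq_or_ne d p with rfl | hdp
  · rcases eq_or_ne (n / d) d with h | h
    · rw [h]
      simp [rho, Nat.gcd_self, hp]
    · simp [h]
  · simp [hdp]

set_option maxHeartbeats 1000000 in
lemma arith_mul_ne_zero (f g : ArithmeticFunction ℂ) (hf : f ≠ 0) (hg : g ≠ 0) :
    f * g ≠ 0 := by
  have hfm : ∃ m, f m ≠ 0 := by
    by_contra h; push_neg at h
    exact hf (ArithmeticFunction.ext fun n => by simp [h n])
  have hgn : ∃ m, g m ≠ 0 := by
    by_contra h; push_neg at h
    exact hg (ArithmeticFunction.ext fun n => by simp [h n])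
  set M := Nat.find hfm with hMdef
  set N := Nat.find hgn with hNdef
  have hM : f M ≠ 0 := Nat.find_spec hfm
  have hN : g N ≠ 0 := Nat.find_spec hgn
  have hMpos : 0 < M := Nat.pos_of_ne_zero fun h => hM (h ▸ f.map_zero)
  have hNpos : 0 < N := Nat.pos_of_ne_zero fun h => hN (h ▸ g.map_zero)
  have key : (f * g) (M * N) = f M * g N := by
    rw [ArithmeticFunction.mul_apply]
    rw [Finset.sum_eq_single (M, N)]
    · intro b hb hbne
      rw [Nat.mem_divisorsAntidiagonal] at hb
      by_contra hcon
      have h1 : f b.1 ≠ 0 := fun h => hcon (by simp [h])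
      have h2 : g b.2 ≠ 0 := fun h => hcon (by simp [h])
      have hb1 : M ≤ b.1 := Nat.find_min' hfm h1
      have hb2 : N ≤ b.2 := Nat.find_min' hgn h2
      have e : b.1 * b.2 = M * N := hb.1
      have h1' : b.1 ≤ M := by
        have : b.1 * N ≤ M * N := by
          calc b.1 * N ≤ b.1 * b.2 := Nat.mul_le_mul_left _ hb2
          _ = M * N := e
        exact Nat.le_of_mul_le_mul_right this hNpos
      have h2' : b.2 ≤ N := by
        have : M * b.2 ≤ M * N := by
          calc M * b.2 ≤ b.1 * b.2 := Nat.mul_le_mul_right _ hb1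
          _ = M * N := e
        exact Nat.le_of_mul_le_mul_left this hMpos
      apply hbne
      have e1 : b.1 = M := le_antisymm h1' hb1
      have e2 : b.2 = N := le_antisymm h2' hb2
      exact Prod.ext e1 e2
    · intro h
      exact absurd (Nat.mem_divisorsAntidiagonal.mpr ⟨rfl, Nat.mul_ne_zero hMpos.ne' hNpos.ne'⟩) h
  intro h0
  rw [h0] at key
  simp at key
  rcases key with h | h
  · exact hM h
  · exact hN h

theorem sconv_zero_divisors_iff (S : Set ℕ) (hSpos : ∀ n ∈ S, 0 < n) (hS1 : 1 ∈ S)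
    (hSmul : ∀ m n : ℕ, Nat.Coprime m n → rho S (m * n) = rho S m * rho S n)
    (hup : ∀ p : ℕ, p.Prime → ∀ j : ℕ, 1 ≤ j → p ^ j ∈ S → ∀ ℓ : ℕ, j ≤ ℓ → p ^ ℓ ∈ S) :
    ((∃ f g : ArithmeticFunction ℂ, f ≠ 0 ∧ g ≠ 0 ∧ ∀ n : ℕ, sconv S f g n = 0) ↔
      S ≠ {n : ℕ | 0 < n}) ∧
    (∀ p : ℕ, p.Prime → p ∉ S →
      ((fun n : ℕ => if n = p then (1 : ℂ) else 0) ≠ 0 ∧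
        ∀ n : ℕ, sconv S (fun m => if m = p then 1 else 0)
          (fun m => if m = p then 1 else 0) n = 0)) := by
  constructor
  · constructor
    · -- forward: zero divisors → S ≠ positives
      rintro ⟨f, g, hf, hg, hfg⟩ hSeq
      have hconv : ∀ n : ℕ, (f * g) n = 0 := by
        intro n
        rcases Nat.eq_zero_or_pos n with rfl | hn
        · exact (f * g).map_zero
        · have := hfg n
          rw [ArithmeticFunction.mul_apply,
            Nat.sum_divisorsAntidiagonal (fun a b => f a * g b), ← hfg n]
          unfold sconv
          apply Finset.sum_congr rfl
          intro d hd
          have hdpos : 0 < d := Nat.pos_of_mem_divisors hd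
          have hmem : Nat.gcd d (n / d) ∈ S := by
            rw [hSeq]; exact Nat.gcd_pos_of_pos_left _ hdpos
          simp [rho, hmem]
      exact arith_mul_ne_zero f g hf hg (ArithmeticFunction.ext fun n => by simp [hconv n])
    · -- backward: S ≠ positives → zero divisors
      intro hne
      -- find a prime not in S
      have hprime : ∃ p : ℕ, p.Prime ∧ p ∉ S := by
        by_contra h
        push_neg at h
        apply hne
        ext n
        simp only [Set.mem_setOf_eq]
        constructor
        · exact hSpos n
        · intro hn
          induction n using Nat.recOnPrimePow with
          | zero => omega
          | one => exact hS1
          | prime_pow_mul a p k hp hpa hk ih =>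
            have ha : 0 < a := Nat.pos_of_ne_zero fun h => by subst h; simp at hn
            have ihs : a ∈ S := ih ha
            have hpk : p ^ k ∈ S := hup p hp 1 le_rfl (by simpa using h p hp) k hk
            have hcop : Nat.Coprime (p ^ k) a :=
              Nat.Coprime.pow_left _ ((Nat.Prime.coprime_iff_not_dvd hp).mpr hpa)
            have hmul := hSmul (p ^ k) a hcop
            unfold rho at hmul
            rw [if_pos hpk, if_pos ihs, mul_one] at hmul
            by_contra hnotin
            rw [if_neg hnotin] at hmul
            exact zero_ne_one hmul
      obtain ⟨p, hp, hpS⟩ := hprime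
      refine ⟨⟨fun n => if n = p then 1 else 0, by simp [hp.ne_zero, Ne.symm hp.ne_zero]⟩,
        ⟨fun n => if n = p then 1 else 0, by simp [Ne.symm hp.ne_zero]⟩, ?_, ?_, ?_⟩
      · intro h
        have := congrArg (fun F : ArithmeticFunction ℂ => F p) h
        simp at this
      · intro h
        have := congrArg (fun F : ArithmeticFunction ℂ => F p) h
        simp at this
      · intro n
        have := sconv_key S p hpS n
        convert this using 2 <;> rfl
  · -- second part
    intro p hp hpS
    constructor
    · intro h
      have := congrFun h p
      simp at this
    · exact sconv_key S p hpS
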